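/- arXiv:0704.2119 — 3 statements merged into one kernel-verified Lean document; each statement's English description precedes it below -/
import Mathlib

section
/- Let (X, μ) be a finite measure space, let N ≥ 1, and let U : L²(μ, ℂᴺ) → L²(μ, ℂᴺ) be a continuous linear equivalence (a bounded bijective linear operator with bounded inverse) such that U(f·φ) = f·U(φ) for every bounded measurable function f : X → ℂ and every φ ∈ L²(μ, ℂᴺ). Suppose Ψ : X → Mat_N(ℂ) is an essentially bounded measurable function with (Uφ)(x) = Ψ(x)φ(x) for μ-almost all x, for every φ ∈ L²(μ, ℂᴺ). Then Ψ(x) is an invertible matrix for μ-almost all x ∈ X, the function x ↦ Ψ(x)⁻¹ (defined almost everywhere) is essentially bounded, and U⁻¹ is given by (U⁻¹φ)(x) = Ψ(x)⁻¹φ(x) for μ-almost all x, for every φ ∈ L²(μ, ℂᴺ). -/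
open MeasureTheory

private lemma sq_eLpNorm_two {α : Type*} [MeasurableSpace α] {μ : Measure α} {E : Type*}
    [NormedAddCommGroup E] (f : α → E) :
    (eLpNorm f 2 μ) ^ (2:ℝ) = ∫⁻ x, (‖f x‖₊ : ENNReal) ^ (2:ℝ) ∂μ := by
  rw [eLpNorm_eq_lintegral_rpow_enorm_toReal (by norm_num) (by norm_num), ← ENNReal.rpow_mul]
  norm_num [enorm_eq_nnnorm]

/-- Let `(X, μ)` be a finite measure space, `N ≥ 1`, and let `U` be a
continuous linear equivalence of `L²(μ, ℂᴺ)` commuting with pointwise multiplication by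
every bounded measurable function `f : X → ℂ`. If `Ψ : X → Mat_N(ℂ)` is an essentially
bounded measurable function representing `U`, i.e. `(Uφ)(x) = Ψ(x) φ(x)` a.e. for every
`φ ∈ L²`, then `Ψ(x)` is invertible for a.e. `x`, the a.e.-defined inverse `x ↦ Ψ(x)⁻¹`
is essentially bounded, and `U⁻¹` is given by multiplication by it. (Matrices acting on
`ℂᴺ` are encoded as continuous linear endomorphisms of `EuclideanSpace ℂ (Fin N)`.) -/
theorem stmt3 {X : Type*} [MeasurableSpace X] (μ : Measure X) [IsFiniteMeasure μ]
    (N : ℕ) (hN : 1 ≤ N)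
    (U : Lp (EuclideanSpace ℂ (Fin N)) 2 μ ≃L[ℂ] Lp (EuclideanSpace ℂ (Fin N)) 2 μ)
    (hU : ∀ f : X → ℂ, Measurable f → (∃ C : ℝ, ∀ x, ‖f x‖ ≤ C) →
      ∀ φ ψ : Lp (EuclideanSpace ℂ (Fin N)) 2 μ,
        (∀ᵐ x ∂μ, ψ x = f x • φ x) → ∀ᵐ x ∂μ, (U ψ) x = f x • (U φ) x)
    (Ψ : X → (EuclideanSpace ℂ (Fin N) →L[ℂ] EuclideanSpace ℂ (Fin N)))
    (hΨ : MemLp Ψ ⊤ μ)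
    (hrep : ∀ φ : Lp (EuclideanSpace ℂ (Fin N)) 2 μ, ∀ᵐ x ∂μ, (U φ) x = Ψ x (φ x)) :
    (∀ᵐ x ∂μ, Function.Bijective (Ψ x)) ∧
    ∃ Φ : X → (EuclideanSpace ℂ (Fin N) →L[ℂ] EuclideanSpace ℂ (Fin N)),
      MemLp Φ ⊤ μ ∧
      (∀ᵐ x ∂μ, (Φ x).comp (Ψ x) = ContinuousLinearMap.id ℂ (EuclideanSpace ℂ (Fin N)) ∧
        (Ψ x).comp (Φ x) = ContinuousLinearMap.id ℂ (EuclideanSpace ℂ (Fin N))) ∧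
      ∀ φ : Lp (EuclideanSpace ℂ (Fin N)) 2 μ, ∀ᵐ x ∂μ, (U.symm φ) x = Φ x (φ x) := by
  classical
  let e : Fin N → EuclideanSpace ℂ (Fin N) := fun i => EuclideanSpace.single i 1
  have he_norm : ∀ i, ‖e i‖ = 1 := fun i => by
    simp only [e, EuclideanSpace.norm_single, norm_one]
  let φc : Fin N → Lp (EuclideanSpace ℂ (Fin N)) 2 μ := fun i => (memLp_const (e i)).toLp _
  let ψc : Fin N → Lp (EuclideanSpace ℂ (Fin N)) 2 μ := fun i => U.symm (φc i)
  -- key a.e. identity : Ψ x (ψc i x) = e i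
  have hkey : ∀ i, ∀ᵐ x ∂μ, Ψ x (ψc i x) = e i := by
    intro i
    have h1 := hrep (ψc i)
    have h2 : U (ψc i) = φc i := U.apply_symm_apply _
    rw [h2] at h1
    have h3 : (φc i : X → EuclideanSpace ℂ (Fin N)) =ᵐ[μ] fun _ => e i := MemLp.coeFn_toLp _
    filter_upwards [h1, h3] with x hx hx3
    rw [← hx, hx3]
  have hkeyall : ∀ᵐ x ∂μ, ∀ i, Ψ x (ψc i x) = e i := ae_all_iff.mpr hkey
  -- the candidate inverse
  let Φ : X → (EuclideanSpace ℂ (Fin N) →L[ℂ] EuclideanSpace ℂ (Fin N)) :=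
    fun x => ∑ i, (innerSL ℂ (e i)).smulRight (ψc i x)
  have hΦapply : ∀ x (v : EuclideanSpace ℂ (Fin N)),
      Φ x v = ∑ i, v i • (ψc i x : EuclideanSpace ℂ (Fin N)) := by
    intro x v
    simp only [Φ, ContinuousLinearMap.sum_apply, ContinuousLinearMap.smulRight_apply,
      innerSL_apply_apply, e]
    congr 1
    funext i
    rw [EuclideanSpace.inner_single_left]
    simp
  have hbasis : ∀ v : EuclideanSpace ℂ (Fin N), ∑ i, v i • e i = v := by
    intro v
    simpa only [EuclideanSpace.basisFun_apply, EuclideanSpace.basisFun_repr] using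
      (EuclideanSpace.basisFun (Fin N) ℂ).sum_repr v
  -- bijectivity a.e.
  have hbij : ∀ᵐ x ∂μ, Function.Bijective (Ψ x) := by
    filter_upwards [hkeyall] with x hx
    have hsurj : Function.Surjective (Ψ x) := by
      intro v
      refine ⟨Φ x v, ?_⟩
      rw [hΦapply, map_sum]
      simp_rw [_root_.map_smul, hx]
      exact hbasis v
    have hinj : Function.Injective (Ψ x) :=
      LinearMap.injective_iff_surjective
        (f := ((Ψ x : EuclideanSpace ℂ (Fin N) →L[ℂ] EuclideanSpace ℂ (Fin N)) :
          EuclideanSpace ℂ (Fin N) →ₗ[ℂ] EuclideanSpace ℂ (Fin N))).mpr hsurj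
    exact ⟨hinj, hsurj⟩
  -- inverse identities a.e.
  have hinv : ∀ᵐ x ∂μ, (Φ x).comp (Ψ x) = ContinuousLinearMap.id ℂ (EuclideanSpace ℂ (Fin N)) ∧
      (Ψ x).comp (Φ x) = ContinuousLinearMap.id ℂ (EuclideanSpace ℂ (Fin N)) := by
    filter_upwards [hkeyall, hbij] with x hx hbx
    have hright : (Ψ x).comp (Φ x) = ContinuousLinearMap.id ℂ (EuclideanSpace ℂ (Fin N)) := by
      refine ContinuousLinearMap.ext fun v => ?_
      rw [ContinuousLinearMap.comp_apply, ContinuousLinearMap.id_apply]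
      rw [hΦapply, map_sum]
      simp_rw [_root_.map_smul, hx]
      exact hbasis v
    refine ⟨?_, hright⟩
    refine ContinuousLinearMap.ext fun v => ?_
    rw [ContinuousLinearMap.comp_apply, ContinuousLinearMap.id_apply]
    apply hbx.1
    have := congrArg (fun T : EuclideanSpace ℂ (Fin N) →L[ℂ] EuclideanSpace ℂ (Fin N) =>
      T (Ψ x v)) hright
    simpa using this
  -- representation of the inverse
  have hrepinv : ∀ φ : Lp (EuclideanSpace ℂ (Fin N)) 2 μ,
      ∀ᵐ x ∂μ, (U.symm φ) x = Φ x (φ x) := by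
    intro φ
    have h1 := hrep (U.symm φ)
    rw [U.apply_symm_apply] at h1
    filter_upwards [h1, hinv] with x hx hinvx
    have h2 : Φ x (φ x) = Φ x (Ψ x ((U.symm φ) x)) := by rw [hx]
    rw [h2]
    have := congrArg (fun T : EuclideanSpace ℂ (Fin N) →L[ℂ] EuclideanSpace ℂ (Fin N) =>
      T ((U.symm φ) x)) hinvx.1
    simpa using this.symm
  -- boundedness of columns
  set CC : ℝ := ‖(U.symm : Lp (EuclideanSpace ℂ (Fin N)) 2 μ →L[ℂ]
    Lp (EuclideanSpace ℂ (Fin N)) 2 μ)‖ with hCCdef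
  have hCC : 0 ≤ CC := norm_nonneg _
  have hbdd : ∀ i, ∀ᵐ x ∂μ, ‖(ψc i : X → EuclideanSpace ℂ (Fin N)) x‖ ≤ CC + 1 := by
    intro i
    obtain ⟨g, hg_sm, hg_ae⟩ := Lp.aestronglyMeasurable (ψc i)
    set A : Set X := {x | CC + 1 ≤ ‖g x‖} with hAdef
    have hA : MeasurableSet A :=
      measurableSet_le measurable_const hg_sm.norm.measurable
    have hmem : MemLp (A.indicator fun _ => e i) 2 μ := (memLp_const (e i)).indicator hA
    set φA : Lp (EuclideanSpace ℂ (Fin N)) 2 μ := hmem.toLp _ with hφAdef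
    set ψA : Lp (EuclideanSpace ℂ (Fin N)) 2 μ := U.symm φA with hψAdef
    have h1 := hrep ψA
    have h1' : U ψA = φA := U.apply_symm_apply _
    rw [h1'] at h1
    have h2 : (φA : X → EuclideanSpace ℂ (Fin N)) =ᵐ[μ] A.indicator fun _ => e i :=
      MemLp.coeFn_toLp _
    have h3 : (ψA : X → EuclideanSpace ℂ (Fin N)) =ᵐ[μ] A.indicator g := by
      filter_upwards [h1, h2, hkey i, hbij, hg_ae] with x hx1 hx2 hxkey hxbij hxg
      apply hxbij.1
      rw [← hx1, hx2]
      by_cases hxA : x ∈ A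
      · simp only [Set.indicator_of_mem hxA]
        rw [← hxg, hxkey]
      · simp [Set.indicator_of_notMem hxA]
    -- norm estimates
    have hnorm : ‖ψA‖ ≤ CC * ‖φA‖ :=
      (U.symm : Lp (EuclideanSpace ℂ (Fin N)) 2 μ →L[ℂ]
        Lp (EuclideanSpace ℂ (Fin N)) 2 μ).le_opNorm φA
    have hμA : μ A ≠ ⊤ := measure_ne_top μ A
    have e1 : (eLpNorm (φA : X → EuclideanSpace ℂ (Fin N)) 2 μ) ^ (2:ℝ) = μ A := by
      rw [eLpNorm_congr_ae h2, sq_eLpNorm_two]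
      have hpt : ∀ x, (‖(A.indicator (fun _ => e i)) x‖₊ : ENNReal) ^ (2:ℝ)
          = A.indicator (fun _ => (1 : ENNReal)) x := by
        intro x
        by_cases hx : x ∈ A
        · simp [Set.indicator_of_mem hx, he_norm i, ← enorm_eq_nnnorm, ← ofReal_norm]
        · simp [Set.indicator_of_notMem hx, ENNReal.zero_rpow_of_pos (by norm_num : (0:ℝ) < 2)]
      simp_rw [hpt]
      rw [lintegral_indicator hA]
      simp
    have e2 : ENNReal.ofReal ((CC+1)^2) * μ A
        ≤ (eLpNorm (ψA : X → EuclideanSpace ℂ (Fin N)) 2 μ) ^ (2:ℝ) := by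
      rw [eLpNorm_congr_ae h3, sq_eLpNorm_two]
      have hpt : ∀ x, A.indicator (fun y => (‖g y‖₊ : ENNReal) ^ (2:ℝ)) x
          = (‖(A.indicator g) x‖₊ : ENNReal) ^ (2:ℝ) := by
        intro x
        by_cases hx : x ∈ A
        · simp [Set.indicator_of_mem hx]
        · simp [Set.indicator_of_notMem hx,
            ENNReal.zero_rpow_of_pos (by norm_num : (0:ℝ) < 2)]
      calc ENNReal.ofReal ((CC+1)^2) * μ A
          = ∫⁻ _ in A, ENNReal.ofReal ((CC+1)^2) ∂μ := by
            rw [setLIntegral_const]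
        _ ≤ ∫⁻ x in A, (‖g x‖₊ : ENNReal) ^ (2:ℝ) ∂μ := by
            refine setLIntegral_mono
              (hg_sm.nnnorm.measurable.coe_nnreal_ennreal.pow_const _) ?_
            intro x hx
            have hx' : CC + 1 ≤ ‖g x‖ := hx
            rw [← enorm_eq_nnnorm, ← ofReal_norm, ENNReal.ofReal_rpow_of_nonneg (norm_nonneg _)
              (by norm_num)]
            apply ENNReal.ofReal_le_ofReal
            rw [show ((2:ℝ) : ℝ) = ((2:ℕ) : ℝ) by norm_num, Real.rpow_natCast]
            exact pow_le_pow_left₀ (by positivity) hx' 2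
        _ = ∫⁻ x, A.indicator (fun y => (‖g y‖₊ : ENNReal) ^ (2:ℝ)) x ∂μ := by
            rw [lintegral_indicator hA]
        _ = ∫⁻ x, (‖(A.indicator g) x‖₊ : ENNReal) ^ (2:ℝ) ∂μ := by
            simp_rw [hpt]
    have e3 : eLpNorm (ψA : X → EuclideanSpace ℂ (Fin N)) 2 μ
        ≤ ENNReal.ofReal CC * eLpNorm (φA : X → EuclideanSpace ℂ (Fin N)) 2 μ := by
      have hne1 : eLpNorm (ψA : X → EuclideanSpace ℂ (Fin N)) 2 μ ≠ ⊤ := Lp.eLpNorm_ne_top ψA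
      have hne2 : eLpNorm (φA : X → EuclideanSpace ℂ (Fin N)) 2 μ ≠ ⊤ := Lp.eLpNorm_ne_top φA
      have hv1 : eLpNorm (ψA : X → EuclideanSpace ℂ (Fin N)) 2 μ = ENNReal.ofReal ‖ψA‖ := by
        rw [Lp.norm_def, ENNReal.ofReal_toReal hne1]
      have hv2 : eLpNorm (φA : X → EuclideanSpace ℂ (Fin N)) 2 μ = ENNReal.ofReal ‖φA‖ := by
        rw [Lp.norm_def, ENNReal.ofReal_toReal hne2]
      rw [hv1, hv2, ← ENNReal.ofReal_mul hCC]
      exact ENNReal.ofReal_le_ofReal hnorm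
    have hchain : ENNReal.ofReal ((CC+1)^2) * μ A ≤ ENNReal.ofReal (CC^2) * μ A := by
      calc ENNReal.ofReal ((CC+1)^2) * μ A
          ≤ (eLpNorm (ψA : X → EuclideanSpace ℂ (Fin N)) 2 μ) ^ (2:ℝ) := e2
        _ ≤ (ENNReal.ofReal CC * eLpNorm (φA : X → EuclideanSpace ℂ (Fin N)) 2 μ) ^ (2:ℝ) :=
            ENNReal.rpow_le_rpow e3 (by norm_num)
        _ = (ENNReal.ofReal CC) ^ (2:ℝ)
            * (eLpNorm (φA : X → EuclideanSpace ℂ (Fin N)) 2 μ) ^ (2:ℝ) :=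
            ENNReal.mul_rpow_of_nonneg _ _ (by norm_num)
        _ = ENNReal.ofReal (CC^2) * μ A := by
            rw [e1, ENNReal.ofReal_rpow_of_nonneg hCC (by norm_num)]
            congr 2
            rw [show ((2:ℝ) : ℝ) = ((2:ℕ) : ℝ) by norm_num, Real.rpow_natCast]
    have hμA0 : μ A = 0 := by
      by_contra h
      have h' := (ENNReal.mul_le_mul_iff_left h hμA).mp hchain
      have h'' := (ENNReal.ofReal_le_ofReal_iff (by positivity)).mp h'
      nlinarith
    have hlt : ∀ᵐ x ∂μ, ‖g x‖ < CC + 1 := by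
      rw [ae_iff]
      simpa [hAdef, not_lt] using hμA0
    filter_upwards [hlt, hg_ae] with x h1x h2x
    rw [h2x]
    exact h1x.le
  -- essential boundedness of Φ
  have hmeasΦ : AEStronglyMeasurable Φ μ := by
    apply Finset.aestronglyMeasurable_fun_sum
    intro i _
    exact ((ContinuousLinearMap.smulRightL ℂ (EuclideanSpace ℂ (Fin N))
      (EuclideanSpace ℂ (Fin N)) (innerSL ℂ (e i))).continuous).comp_aestronglyMeasurable
      (Lp.aestronglyMeasurable (ψc i))
  have hΦbdd : ∀ᵐ x ∂μ, ‖Φ x‖ ≤ (N : ℝ) * (CC + 1) := by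
    filter_upwards [ae_all_iff.mpr hbdd] with x hx
    calc ‖Φ x‖ ≤ ∑ i, ‖((innerSL ℂ (e i)).smulRight ((ψc i : X → EuclideanSpace ℂ (Fin N)) x))‖ := norm_sum_le _ _
      _ ≤ ∑ _i : Fin N, (CC + 1) := by
          refine Finset.sum_le_sum fun i _ => ?_
          rw [ContinuousLinearMap.norm_smulRight_apply, innerSL_apply_norm, he_norm i, one_mul]
          exact hx i
      _ = (N : ℝ) * (CC + 1) := by
          simp only [Finset.sum_const, Finset.card_univ, Fintype.card_fin, nsmul_eq_mul]
  have hΦmem : MemLp Φ ⊤ μ := memLp_top_of_bound hmeasΦ _ hΦbdd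
  exact ⟨hbij, Φ, hΦmem, hinv, hrepinv⟩
end

section
/- Let V be a real vector space with two inner products g and g′, let W and W′ be nonzero complex vector spaces, and let c : V → End(W) and c′ : V → End(W′) be linear maps satisfying the Clifford relations c(ξ)∘c(η) + c(η)∘c(ξ) = −2 g(ξ,η)·id_W and c′(ξ)∘c′(η) + c′(η)∘c′(ξ) = −2 g′(ξ,η)·id_{W′} for all ξ, η ∈ V. Suppose there is a linear isomorphism Ψ : W → W′ such that √(g(ξ,ξ)) · c′(ξ) = √(g′(ξ,ξ)) · (Ψ ∘ c(ξ) ∘ Ψ⁻¹) for every nonzero ξ ∈ V (i.e. c′(ξ)/‖ξ‖_{g′} = Ψ ∘ (c(ξ)/‖ξ‖_g) ∘ Ψ⁻¹). Then for all nonzero ξ, η ∈ V one has g′(ξ, η) · √(g(ξ,ξ)) · √(g(η,η)) = g(ξ, η) · √(g′(ξ,ξ)) · √(g′(η,η)). -/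
/-- Let `g`, `g'` be inner products on a real vector space `V`, let `W`,
`W'` be nonzero complex vector spaces, and let `c : V → End(W)`, `c' : V → End(W')` be
(real-)linear maps satisfying the Clifford relations for `g` resp. `g'`. If a linear
isomorphism `Ψ : W ≃ W'` satisfies `‖ξ‖_g • c'(ξ) = ‖ξ‖_{g'} • (Ψ ∘ c(ξ) ∘ Ψ⁻¹)` for
every nonzero `ξ`, then the normalized values of `g` and `g'` agree:
`g'(ξ,η) ‖ξ‖_g ‖η‖_g = g(ξ,η) ‖ξ‖_{g'} ‖η‖_{g'}` for all nonzero `ξ, η`. -/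
theorem stmt5 {V W W' : Type*} [AddCommGroup V] [Module ℝ V]
    [AddCommGroup W] [Module ℂ W] [Nontrivial W]
    [AddCommGroup W'] [Module ℂ W'] [Nontrivial W']
    (g g' : V →ₗ[ℝ] V →ₗ[ℝ] ℝ)
    (hg_symm : ∀ ξ η, g ξ η = g η ξ) (hg_pos : ∀ ξ, ξ ≠ 0 → 0 < g ξ ξ)
    (hg'_symm : ∀ ξ η, g' ξ η = g' η ξ) (hg'_pos : ∀ ξ, ξ ≠ 0 → 0 < g' ξ ξ)
    (c : V → Module.End ℂ W) (c' : V → Module.End ℂ W')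
    (hc_add : ∀ ξ η, c (ξ + η) = c ξ + c η)
    (hc_smul : ∀ (r : ℝ) (ξ : V), c (r • ξ) = (r : ℂ) • c ξ)
    (hc'_add : ∀ ξ η, c' (ξ + η) = c' ξ + c' η)
    (hc'_smul : ∀ (r : ℝ) (ξ : V), c' (r • ξ) = (r : ℂ) • c' ξ)
    (hcl : ∀ ξ η, c ξ * c η + c η * c ξ
      + ((2 * g ξ η : ℝ) : ℂ) • (1 : Module.End ℂ W) = 0)
    (hcl' : ∀ ξ η, c' ξ * c' η + c' η * c' ξ
      + ((2 * g' ξ η : ℝ) : ℂ) • (1 : Module.End ℂ W') = 0)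
    (Ψ : W ≃ₗ[ℂ] W')
    (hΨ : ∀ ξ, ξ ≠ 0 →
      (Real.sqrt (g ξ ξ) : ℂ) • c' ξ
        = (Real.sqrt (g' ξ ξ) : ℂ) •
            (Ψ.toLinearMap ∘ₗ c ξ ∘ₗ Ψ.symm.toLinearMap)) :
    ∀ ξ η, ξ ≠ 0 → η ≠ 0 →
      g' ξ η * Real.sqrt (g ξ ξ) * Real.sqrt (g η η)
        = g ξ η * Real.sqrt (g' ξ ξ) * Real.sqrt (g' η η) := by
  intro ξ η hξ hη
  set a := Real.sqrt (g ξ ξ) with ha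
  set b := Real.sqrt (g η η) with hb
  set a' := Real.sqrt (g' ξ ξ) with ha'
  set b' := Real.sqrt (g' η η) with hb'
  -- conjugation commutes with multiplication
  have conj_mul : ∀ f h : Module.End ℂ W,
      (Ψ.toLinearMap ∘ₗ f ∘ₗ Ψ.symm.toLinearMap) * (Ψ.toLinearMap ∘ₗ h ∘ₗ Ψ.symm.toLinearMap)
        = Ψ.toLinearMap ∘ₗ (f * h) ∘ₗ Ψ.symm.toLinearMap := by
    intro f h
    ext w
    simp [Module.End.mul_apply]
  have hA : c ξ * c η + c η * c ξ = (-(2 * g ξ η : ℝ) : ℂ) • (1 : Module.End ℂ W) := by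
    have := hcl ξ η
    rw [eq_neg_of_add_eq_zero_left this, neg_smul]
  have hA' : c' ξ * c' η + c' η * c' ξ = (-(2 * g' ξ η : ℝ) : ℂ) • (1 : Module.End ℂ W') := by
    have := hcl' ξ η
    rw [eq_neg_of_add_eq_zero_left this, neg_smul]
  have h1 := hΨ ξ hξ
  have h2 := hΨ η hη
  -- multiply the two intertwining relations
  have hmul :
      ((a : ℂ) * b) • (c' ξ * c' η + c' η * c' ξ)
        = ((a' : ℂ) * b') • (Ψ.toLinearMap ∘ₗ (c ξ * c η + c η * c ξ) ∘ₗ Ψ.symm.toLinearMap) := by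
    have e1 : ((a : ℂ) • c' ξ) * ((b : ℂ) • c' η) + ((b : ℂ) • c' η) * ((a : ℂ) • c' ξ)
        = ((a : ℂ) * b) • (c' ξ * c' η + c' η * c' ξ) := by
      rw [smul_mul_smul_comm, smul_mul_smul_comm, smul_add, mul_comm (b : ℂ)]
    rw [← e1, h1, h2, smul_mul_smul_comm, smul_mul_smul_comm, conj_mul, conj_mul,
      mul_comm (b' : ℂ), ← smul_add]
    congr 1
    ext w
    simp [Module.End.mul_apply]
  rw [hA, hA'] at hmul
  have hid : Ψ.toLinearMap ∘ₗ ((-(2 * g ξ η : ℝ) : ℂ) • (1 : Module.End ℂ W)) ∘ₗ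
      Ψ.symm.toLinearMap = (-(2 * g ξ η : ℝ) : ℂ) • (1 : Module.End ℂ W') := by
    ext w; simp
  rw [hid] at hmul
  -- evaluate on a nonzero vector
  obtain ⟨w, hw⟩ := exists_ne (0 : W')
  have key : (((a : ℂ) * b) * (-(2 * g' ξ η : ℝ) : ℂ)) • w
      = (((a' : ℂ) * b') * (-(2 * g ξ η : ℝ) : ℂ)) • w := by
    have := congrArg (fun f : Module.End ℂ W' => f w) hmul
    simpa [smul_smul, LinearMap.smul_apply, Module.End.one_apply] using this
  have hz : (((a : ℂ) * b) * (-(2 * g' ξ η : ℝ) : ℂ))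
      = (((a' : ℂ) * b') * (-(2 * g ξ η : ℝ) : ℂ)) := by
    have hsub : ((((a : ℂ) * b) * (-(2 * g' ξ η : ℝ) : ℂ))
        - (((a' : ℂ) * b') * (-(2 * g ξ η : ℝ) : ℂ))) • w = 0 := by
      rw [sub_smul, key, sub_self]
    exact sub_eq_zero.mp ((smul_eq_zero.mp hsub).resolve_right hw)
  have hr : a * b * (-(2 * g' ξ η)) = a' * b' * (-(2 * g ξ η)) := by
    exact_mod_cast hz
  nlinarith [hr]
end

section
/- Let V be a real vector space with two inner products g and g′, let W and W′ be nonzero complex vector spaces, and let c : V → End(W) and c′ : V → End(W′) be linear maps satisfying the Clifford relations c(ξ)∘c(η) + c(η)∘c(ξ) = −2 g(ξ,η)·id_W and c′(ξ)∘c′(η) + c′(η)∘c′(ξ) = −2 g′(ξ,η)·id_{W′} for all ξ, η ∈ V. Suppose there is a linear isomorphism Ψ : W → W′ such that √(g(ξ,ξ)) · c′(ξ) = √(g′(ξ,ξ)) · (Ψ ∘ c(ξ) ∘ Ψ⁻¹) for every nonzero ξ ∈ V. Then there exists a real number λ > 0 such that g′(ξ, η) = λ · g(ξ, η) for all ξ,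 η ∈ V. -/
/-- Let `g`, `g'` be inner products on a real vector space `V`, let `W`,
`W'` be nonzero complex vector spaces, and let `c : V → End(W)`, `c' : V → End(W')` be
(real-)linear maps satisfying the Clifford relations for `g` resp. `g'`. If a linear
isomorphism `Ψ : W ≃ W'` satisfies `‖ξ‖_g • c'(ξ) = ‖ξ‖_{g'} • (Ψ ∘ c(ξ) ∘ Ψ⁻¹)` for
every nonzero `ξ`, then `g' = λ • g` for some real `λ > 0`. -/
theorem stmt6 {V W W' : Type*} [AddCommGroup V] [Module ℝ V]
    [AddCommGroup W] [Module ℂ W] [Nontrivial W]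
    [AddCommGroup W'] [Module ℂ W'] [Nontrivial W']
    (g g' : V →ₗ[ℝ] V →ₗ[ℝ] ℝ)
    (hg_symm : ∀ ξ η, g ξ η = g η ξ) (hg_pos : ∀ ξ, ξ ≠ 0 → 0 < g ξ ξ)
    (hg'_symm : ∀ ξ η, g' ξ η = g' η ξ) (hg'_pos : ∀ ξ, ξ ≠ 0 → 0 < g' ξ ξ)
    (c : V → Module.End ℂ W) (c' : V → Module.End ℂ W')
    (hc_add : ∀ ξ η, c (ξ + η) = c ξ + c η)
    (hc_smul : ∀ (r : ℝ) (ξ : V), c (r • ξ) = (r : ℂ) • c ξ)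
    (hc'_add : ∀ ξ η, c' (ξ + η) = c' ξ + c' η)
    (hc'_smul : ∀ (r : ℝ) (ξ : V), c' (r • ξ) = (r : ℂ) • c' ξ)
    (hcl : ∀ ξ η, c ξ * c η + c η * c ξ
      + ((2 * g ξ η : ℝ) : ℂ) • (1 : Module.End ℂ W) = 0)
    (hcl' : ∀ ξ η, c' ξ * c' η + c' η * c' ξ
      + ((2 * g' ξ η : ℝ) : ℂ) • (1 : Module.End ℂ W') = 0)
    (Ψ : W ≃ₗ[ℂ] W')
    (hΨ : ∀ ξ, ξ ≠ 0 →
      (Real.sqrt (g ξ ξ) : ℂ) • c' ξ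
        = (Real.sqrt (g' ξ ξ) : ℂ) •
            (Ψ.toLinearMap ∘ₗ c ξ ∘ₗ Ψ.symm.toLinearMap)) :
    ∃ lam : ℝ, 0 < lam ∧ ∀ ξ η, g' ξ η = lam * g ξ η := by
  have hinj : ∀ a b : ℂ, a • (1 : Module.End ℂ W') = b • 1 → a = b := by
    intro a b h
    obtain ⟨w, hw⟩ := exists_ne (0 : W')
    have h2 : a • w = b • w := by
      have := DFunLike.congr_fun h w
      simpa using this
    have h3 : (a - b) • w = 0 := by rw [sub_smul, h2, sub_self]
    rcases smul_eq_zero.mp h3 with h4 | h4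
    · exact sub_eq_zero.mp h4
    · exact absurd h4 hw
  set A := Ψ.toLinearMap with hA
  set B := Ψ.symm.toLinearMap with hB
  have key : ∀ ξ η, ξ ≠ 0 → η ≠ 0 →
      Real.sqrt (g ξ ξ) * Real.sqrt (g η η) * (2 * g' ξ η)
        = Real.sqrt (g' ξ ξ) * Real.sqrt (g' η η) * (2 * g ξ η) := by
    intro ξ η hξ hη
    have hconj : ∀ x y : Module.End ℂ W,
        (A ∘ₗ x ∘ₗ B) * (A ∘ₗ y ∘ₗ B) = A ∘ₗ (x * y) ∘ₗ B := by
      intro x y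
      ext w
      simp [hA, hB, Module.End.mul_apply]
    have h1 := hΨ ξ hξ
    have h2 := hΨ η hη
    have hp1 : ((Real.sqrt (g ξ ξ) : ℂ) * (Real.sqrt (g η η) : ℂ)) • (c' ξ * c' η)
        = ((Real.sqrt (g' ξ ξ) : ℂ) * (Real.sqrt (g' η η) : ℂ)) • (A ∘ₗ (c ξ * c η) ∘ₗ B) := by
      calc ((Real.sqrt (g ξ ξ) : ℂ) * (Real.sqrt (g η η) : ℂ)) • (c' ξ * c' η)
          = ((Real.sqrt (g ξ ξ) : ℂ) • c' ξ) * ((Real.sqrt (g η η) : ℂ) • c' η) := by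
            rw [smul_mul_smul_comm]
        _ = ((Real.sqrt (g' ξ ξ) : ℂ) • (A ∘ₗ c ξ ∘ₗ B)) * ((Real.sqrt (g' η η) : ℂ) • (A ∘ₗ c η ∘ₗ B)) := by
            rw [h1, h2]
        _ = ((Real.sqrt (g' ξ ξ) : ℂ) * (Real.sqrt (g' η η) : ℂ)) • (A ∘ₗ (c ξ * c η) ∘ₗ B) := by
            rw [smul_mul_smul_comm, hconj]
    have hp2 : ((Real.sqrt (g ξ ξ) : ℂ) * (Real.sqrt (g η η) : ℂ)) • (c' η * c' ξ)
        = ((Real.sqrt (g' ξ ξ) : ℂ) * (Real.sqrt (g' η η) : ℂ)) • (A ∘ₗ (c η * c ξ) ∘ₗ B) := by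
      calc ((Real.sqrt (g ξ ξ) : ℂ) * (Real.sqrt (g η η) : ℂ)) • (c' η * c' ξ)
          = ((Real.sqrt (g η η) : ℂ) • c' η) * ((Real.sqrt (g ξ ξ) : ℂ) • c' ξ) := by
            rw [smul_mul_smul_comm, mul_comm]
        _ = ((Real.sqrt (g' η η) : ℂ) • (A ∘ₗ c η ∘ₗ B)) * ((Real.sqrt (g' ξ ξ) : ℂ) • (A ∘ₗ c ξ ∘ₗ B)) := by
            rw [h1, h2]
        _ = ((Real.sqrt (g' ξ ξ) : ℂ) * (Real.sqrt (g' η η) : ℂ)) • (A ∘ₗ (c η * c ξ) ∘ₗ B) := by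
            rw [smul_mul_smul_comm, hconj, mul_comm]
    have hanti : c ξ * c η + c η * c ξ = -(((2 * g ξ η : ℝ) : ℂ) • (1 : Module.End ℂ W)) :=
      eq_neg_of_add_eq_zero_left (hcl ξ η)
    have hanti' : c' ξ * c' η + c' η * c' ξ = -(((2 * g' ξ η : ℝ) : ℂ) • (1 : Module.End ℂ W')) :=
      eq_neg_of_add_eq_zero_left (hcl' ξ η)
    have hsum : ((Real.sqrt (g ξ ξ) : ℂ) * (Real.sqrt (g η η) : ℂ)) • (c' ξ * c' η + c' η * c' ξ)
        = ((Real.sqrt (g' ξ ξ) : ℂ) * (Real.sqrt (g' η η) : ℂ)) • (A ∘ₗ (c ξ * c η + c η * c ξ) ∘ₗ B) := by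
      have hAadd : A ∘ₗ (c ξ * c η + c η * c ξ) ∘ₗ B
          = A ∘ₗ (c ξ * c η) ∘ₗ B + A ∘ₗ (c η * c ξ) ∘ₗ B := by
        ext w; simp [hA, hB]
      rw [smul_add, hp1, hp2, hAadd, smul_add]
    rw [hanti, hanti'] at hsum
    have hconj1 : A ∘ₗ (-(((2 * g ξ η : ℝ) : ℂ) • (1 : Module.End ℂ W))) ∘ₗ B
        = -(((2 * g ξ η : ℝ) : ℂ) • (1 : Module.End ℂ W')) := by
      ext w; simp [hA, hB]
    rw [hconj1] at hsum
    have hsum2 : ((Real.sqrt (g ξ ξ) : ℂ) * (Real.sqrt (g η η) : ℂ) * ((2 * g' ξ η : ℝ) : ℂ))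
          • (1 : Module.End ℂ W')
        = ((Real.sqrt (g' ξ ξ) : ℂ) * (Real.sqrt (g' η η) : ℂ) * ((2 * g ξ η : ℝ) : ℂ))
          • (1 : Module.End ℂ W') := by
      rw [smul_neg, smul_neg] at hsum
      have h' := neg_injective hsum
      rw [smul_smul, smul_smul] at h'
      exact h'
    have hC := hinj _ _ hsum2
    have h5 : ((Real.sqrt (g ξ ξ) * Real.sqrt (g η η) * (2 * g' ξ η) : ℝ) : ℂ)
        = ((Real.sqrt (g' ξ ξ) * Real.sqrt (g' η η) * (2 * g ξ η) : ℝ) : ℂ) := by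
      push_cast
      push_cast at hC
      linear_combination hC
    exact_mod_cast h5
  -- step 2: for fixed nonzero η, g' (·, η) = (g' η η / g η η) * g (·, η)
  have hlam : ∀ η, η ≠ 0 → ∀ ξ, g' ξ η = (g' η η / g η η) * g ξ η := by
    intro η hη ξ
    have hgη : g η η ≠ 0 := (hg_pos η hη).ne'
    by_cases hξ0 : ξ = 0
    · subst hξ0; simp
    · set a := g ξ η / g η η with ha
      set w := ξ - a • η with hwdef
      have hgw : g w η = 0 := by
        simp only [hwdef, map_sub, map_smul, LinearMap.sub_apply, LinearMap.smul_apply,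
          smul_eq_mul, ha]
        field_simp
        simp
      have hg'w : g' w η = 0 := by
        by_cases hw : w = 0
        · simp [hw]
        · have hk := key w η hw hη
          rw [hgw] at hk
          have hp1 : 0 < Real.sqrt (g w w) := Real.sqrt_pos.mpr (hg_pos w hw)
          have hp2 : 0 < Real.sqrt (g η η) := Real.sqrt_pos.mpr (hg_pos η hη)
          have hz : Real.sqrt (g w w) * Real.sqrt (g η η) * (2 * g' w η) = 0 := by
            rw [hk]; ring
          rcases mul_eq_zero.mp hz with h' | h'
          · exact absurd h' (mul_ne_zero hp1.ne' hp2.ne')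
          · linarith
      have hdecomp : ξ = a • η + w := by rw [hwdef]; abel
      calc g' ξ η = g' (a • η + w) η := by rw [← hdecomp]
        _ = a * g' η η + g' w η := by
            simp [map_add, map_smul]
        _ = (g' η η / g η η) * g ξ η := by
            rw [hg'w, ha]; field_simp; ring
  -- comparison of ratios
  have hcmp : ∀ a b, a ≠ 0 → b ≠ 0 → g a b ≠ 0 →
      g' a a / g a a = g' b b / g b b := by
    intro a b ha hb hab
    have e1 := hlam b hb a
    have e2 := hlam a ha b
    have e3 : (g' b b / g b b) * g a b = (g' a a / g a a) * g a b := by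
      rw [← e1, hg'_symm a b, e2, hg_symm b a]
    exact (mul_right_cancel₀ hab e3).symm
  by_cases hV : ∀ ξ : V, ξ = 0
  · refine ⟨1, one_pos, fun ξ η => ?_⟩
    rw [hV ξ]; simp
  · push_neg at hV
    obtain ⟨ξ₀, hξ₀⟩ := hV
    refine ⟨g' ξ₀ ξ₀ / g ξ₀ ξ₀, div_pos (hg'_pos _ hξ₀) (hg_pos _ hξ₀), fun ξ η => ?_⟩
    by_cases hη : η = 0
    · subst hη; simp
    · rw [hlam η hη ξ]
      have hconst : g' η η / g η η = g' ξ₀ ξ₀ / g ξ₀ ξ₀ := by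
        by_cases h0 : g η ξ₀ = 0
        · have hs : η + ξ₀ ≠ 0 := by
            intro h
            have h1 : g (η + ξ₀) ξ₀ = 0 := by rw [h]; simp
            rw [map_add, LinearMap.add_apply, h0, zero_add] at h1
            exact (hg_pos ξ₀ hξ₀).ne' h1
          have c1 : g η (η + ξ₀) ≠ 0 := by
            have he : g η (η + ξ₀) = g η η := by
              rw [map_add, h0, add_zero]
            rw [he]
            exact (hg_pos η hη).ne'
          have c2 : g (η + ξ₀) ξ₀ ≠ 0 := by
            rw [map_add, LinearMap.add_apply, h0, zero_add]
            exact (hg_pos ξ₀ hξ₀).ne'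
          calc g' η η / g η η = g' (η + ξ₀) (η + ξ₀) / g (η + ξ₀) (η + ξ₀) :=
                hcmp η (η + ξ₀) hη hs c1
            _ = g' ξ₀ ξ₀ / g ξ₀ ξ₀ := hcmp (η + ξ₀) ξ₀ hs hξ₀ c2
        · exact hcmp η ξ₀ hη hξ₀ h0
      rw [hconst]
end
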